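/- arXiv:1503.08253 — 2 statements merged into one kernel-verified Lean document; each statement's English description precedes it below -/
import Mathlib

section
/- Let F ∈ ℂ[x_1,…,x_n] be a nonzero homogeneous form of degree d and let α ∈ T_1 be a linear form in the dual variables. Then the Waring rank satisfies r(F) ≥ al(α∘F) − al(α²∘F). -/
open MvPolynomial

/-- The iterated partial derivative `∂^m` applied to `F`: on a monomial `x^k` it gives
`(∏ᵢ kᵢ(kᵢ-1)⋯(kᵢ-mᵢ+1)) · x^(k-m)`, i.e. each dual variable `αᵢ` acts as `∂/∂xᵢ`. -/
noncomputable def mderiv {σ : Type*} (m : σ →₀ ℕ) (F : MvPolynomial σ ℂ) :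
    MvPolynomial σ ℂ :=
  (AddMonoidAlgebra.coeff F).sum fun k c =>
    MvPolynomial.monomial (k - m) (c * ∏ i ∈ m.support, (Nat.descFactorial (k i) (m i) : ℂ))

/-- The apolarity action `Θ ∘ F` of a polynomial `Θ` in the dual variables on `F`,
as a constant-coefficient differential operator. -/
noncomputable def diffOp {σ : Type*} (Θ F : MvPolynomial σ ℂ) : MvPolynomial σ ℂ :=
  (AddMonoidAlgebra.coeff Θ).sum fun m c => c • mderiv m F

/-- Apolar length `al F`: the dimension of the space `Diff(F) = {Θ ∘ F : Θ ∈ T}` of all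
partial derivatives of `F` of all orders (including `F` itself). -/
noncomputable def apolarLength {σ : Type*} (F : MvPolynomial σ ℂ) : ℕ :=
  Module.finrank ℂ (Submodule.span ℂ (Set.range fun Θ => diffOp Θ F))

/-- The Hilbert function of the apolar algebra of `F`: the dimension of the span of the
`i`-th order partial derivatives `{Θ ∘ F : Θ homogeneous of degree i}`. -/
noncomputable def hilbFn {σ : Type*} (F : MvPolynomial σ ℂ) (i : ℕ) : ℕ :=
  Module.finrank ℂ (Submodule.span ℂ
    {G : MvPolynomial σ ℂ | ∃ Θ : MvPolynomial σ ℂ, Θ.IsHomogeneous i ∧ diffOp Θ F = G})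

/-- Waring rank of a degree-`d` form: the least `r` such that
`F = c₁ ℓ₁^d + ⋯ + c_r ℓ_r^d` for linear forms `ℓᵢ` and scalars `cᵢ ∈ ℂ`. -/
noncomputable def waringRank {σ : Type*} [Fintype σ] (d : ℕ) (F : MvPolynomial σ ℂ) : ℕ :=
  sInf {r : ℕ | ∃ (c : Fin r → ℂ) (v : Fin r → σ → ℂ),
    F = ∑ i, c i • (∑ j, v i j • MvPolynomial.X j) ^ d}

section Basic
variable {σ : Type*}

lemma descFactorial_add' (k a b : ℕ) :
    k.descFactorial (b + a) = k.descFactorial b * (k - b).descFactorial a := by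
  induction a with
  | zero => simp
  | succ a ih =>
      rw [show b + (a + 1) = (b + a) + 1 from rfl, Nat.descFactorial_succ,
        Nat.descFactorial_succ, ih, Nat.sub_sub]
      ring

lemma mderiv_monomial (m k : σ →₀ ℕ) (c : ℂ) :
    mderiv m (monomial k c) =
      monomial (k - m) (c * ∏ i ∈ m.support, (Nat.descFactorial (k i) (m i) : ℂ)) := by
  unfold mderiv
  rw [← single_eq_monomial, AddMonoidAlgebra.coeff_single, Finsupp.sum_single_index (by simp)]

lemma mderiv_add (m : σ →₀ ℕ) (F G : MvPolynomial σ ℂ) :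
    mderiv m (F + G) = mderiv m F + mderiv m G := by
  unfold mderiv
  apply Finsupp.sum_add_index'
  · intro k; simp
  · intro k c₁ c₂; rw [add_mul, map_add]

lemma mderiv_smul (m : σ →₀ ℕ) (c : ℂ) (F : MvPolynomial σ ℂ) :
    mderiv m (c • F) = c • mderiv m F := by
  unfold mderiv
  rw [AddMonoidAlgebra.coeff_smul, Finsupp.sum_smul_index (by intro i; simp)]
  rw [Finsupp.smul_sum]
  apply Finsupp.sum_congr
  intro k _
  rw [smul_monomial, smul_eq_mul, mul_assoc]

lemma mderiv_zero (F : MvPolynomial σ ℂ) : mderiv 0 F = F := by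
  unfold mderiv
  simp only [Finsupp.support_zero, Finset.prod_empty, mul_one, tsub_zero]
  simp only [← single_eq_monomial]
  exact AddMonoidAlgebra.sum_coeff_single F

lemma support_add_eq_union [DecidableEq σ] (a b : σ →₀ ℕ) :
    (a + b).support = a.support ∪ b.support := by
  ext i
  simp only [Finsupp.mem_support_iff, Finset.mem_union, Finsupp.add_apply, Nat.add_eq_zero,
    not_and_or]
  omega

lemma mderiv_mderiv (a b : σ →₀ ℕ) (F : MvPolynomial σ ℂ) :
    mderiv a (mderiv b F) = mderiv (a + b) F := by
  classical
  induction F using MvPolynomial.induction_on' with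
  | add p q hp hq => rw [mderiv_add, mderiv_add, mderiv_add, hp, hq]
  | monomial k c =>
      rw [mderiv_monomial, mderiv_monomial, mderiv_monomial]
      rw [tsub_tsub, add_comm b a]
      congr 1
      rw [mul_assoc]
      congr 1
      have hsub : ∀ (u : σ →₀ ℕ), u.support ⊆ a.support ∪ b.support → ∀ (w : σ →₀ ℕ),
          ∏ i ∈ u.support, (Nat.descFactorial (w i) (u i) : ℂ)
            = ∏ i ∈ a.support ∪ b.support, (Nat.descFactorial (w i) (u i) : ℂ) := by
        intro u hu w
        apply Finset.prod_subset hu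
        intro i _ hi
        rw [Finsupp.notMem_support_iff.mp hi]
        simp
      rw [hsub b (Finset.subset_union_right (s₁ := a.support)) k,
          hsub a (Finset.subset_union_left (s₂ := b.support)) (k - b),
          hsub (a + b) (by rw [support_add_eq_union]) k]
      rw [← Finset.prod_mul_distrib]
      apply Finset.prod_congr rfl
      intro i _
      rw [Finsupp.add_apply, Finsupp.tsub_apply, Nat.add_comm (a i) (b i),
        descFactorial_add' (k i) (a i) (b i)]
      push_cast
      ring

end Basic

section DiffOp
variable {σ : Type*}

lemma diffOp_monomial (a : σ →₀ ℕ) (c : ℂ) (F : MvPolynomial σ ℂ) :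
    diffOp (monomial a c) F = c • mderiv a F := by
  unfold diffOp
  rw [← single_eq_monomial, AddMonoidAlgebra.coeff_single, Finsupp.sum_single_index (by simp)]

lemma diffOp_add_left (Θ Ψ F : MvPolynomial σ ℂ) :
    diffOp (Θ + Ψ) F = diffOp Θ F + diffOp Ψ F := by
  unfold diffOp
  apply Finsupp.sum_add_index'
  · intro m; simp
  · intro m c₁ c₂; rw [add_smul]

lemma diffOp_smul_left (c : ℂ) (Θ F : MvPolynomial σ ℂ) :
    diffOp (c • Θ) F = c • diffOp Θ F := by
  unfold diffOp
  rw [AddMonoidAlgebra.coeff_smul, Finsupp.sum_smul_index (by intro i; simp)]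
  rw [Finsupp.smul_sum]
  apply Finsupp.sum_congr
  intro m _
  rw [mul_smul]

lemma diffOp_add_right (Θ F G : MvPolynomial σ ℂ) :
    diffOp Θ (F + G) = diffOp Θ F + diffOp Θ G := by
  unfold diffOp
  rw [← Finsupp.sum_add]
  apply Finsupp.sum_congr
  intro m _
  rw [mderiv_add, smul_add]

lemma diffOp_smul_right (c : ℂ) (Θ F : MvPolynomial σ ℂ) :
    diffOp Θ (c • F) = c • diffOp Θ F := by
  unfold diffOp
  rw [Finsupp.smul_sum]
  apply Finsupp.sum_congr
  intro m _
  rw [mderiv_smul, smul_comm]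

/-- `diffOp` as a linear map in `F`. -/
noncomputable def diffOpL (Θ : MvPolynomial σ ℂ) :
    MvPolynomial σ ℂ →ₗ[ℂ] MvPolynomial σ ℂ where
  toFun F := diffOp Θ F
  map_add' := diffOp_add_right Θ
  map_smul' c F := diffOp_smul_right c Θ F

@[simp] lemma diffOpL_apply (Θ F : MvPolynomial σ ℂ) : diffOpL Θ F = diffOp Θ F := rfl

/-- `diffOp` as a linear map in `Θ`. -/
noncomputable def diffOpT (F : MvPolynomial σ ℂ) :
    MvPolynomial σ ℂ →ₗ[ℂ] MvPolynomial σ ℂ where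
  toFun Θ := diffOp Θ F
  map_add' Θ Ψ := diffOp_add_left Θ Ψ F
  map_smul' c Θ := diffOp_smul_left c Θ F

@[simp] lemma diffOpT_apply (Θ F : MvPolynomial σ ℂ) : diffOpT F Θ = diffOp Θ F := rfl

lemma diffOp_mul (Θ Ψ F : MvPolynomial σ ℂ) :
    diffOp (Θ * Ψ) F = diffOp Θ (diffOp Ψ F) := by
  induction Θ using MvPolynomial.induction_on' with
  | add p q hp hq => rw [add_mul, diffOp_add_left, hp, hq, diffOp_add_left]
  | monomial a c =>
      induction Ψ using MvPolynomial.induction_on' with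
      | add p q hp hq =>
          rw [mul_add, diffOp_add_left, hp, hq, diffOp_add_left, diffOp_add_right]
      | monomial b c' =>
          rw [monomial_mul, diffOp_monomial, diffOp_monomial, diffOp_monomial,
            mderiv_smul, mderiv_mderiv, smul_smul]

lemma diffOp_one (F : MvPolynomial σ ℂ) : diffOp 1 F = F := by
  have : (1 : MvPolynomial σ ℂ) = monomial 0 1 := by simp [monomial_zero']
  rw [this, diffOp_monomial, mderiv_zero, one_smul]

lemma mderiv_single (j : σ) (F : MvPolynomial σ ℂ) :
    mderiv (Finsupp.single j 1) F = pderiv j F := by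
  classical
  induction F using MvPolynomial.induction_on' with
  | add p q hp hq => rw [mderiv_add, map_add, hp, hq]
  | monomial k c =>
      rw [mderiv_monomial, pderiv_monomial]
      congr 1
      rw [Finsupp.support_single_ne_zero _ one_ne_zero, Finset.prod_singleton,
        Finsupp.single_eq_same, Nat.descFactorial_one]

lemma diffOp_X (j : σ) (F : MvPolynomial σ ℂ) : diffOp (X j) F = pderiv j F := by
  rw [X, diffOp_monomial, one_smul, mderiv_single]

/-- The span of all derivatives of `F`. -/
noncomputable abbrev DiffSpan (F : MvPolynomial σ ℂ) : Submodule ℂ (MvPolynomial σ ℂ) :=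
  Submodule.span ℂ (Set.range fun Θ => diffOp Θ F)

lemma DiffSpan_map (Ψ F : MvPolynomial σ ℂ) :
    DiffSpan (diffOp Ψ F) = Submodule.map (diffOpL Ψ) (DiffSpan F) := by
  have h : (fun Θ => diffOp Θ (diffOp Ψ F)) = (diffOpL Ψ) ∘ (fun Θ => diffOp Θ F) := by
    funext Θ
    rw [Function.comp_apply, diffOpL_apply, ← diffOp_mul, mul_comm, diffOp_mul]
  rw [DiffSpan, h, Set.range_comp, ← Submodule.map_span]

end DiffOp

section Linear
variable {σ : Type*}

lemma eq_single_of_degree_one {m : σ →₀ ℕ} (h : Finsupp.degree m = 1) :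
    ∃ j, m = Finsupp.single j 1 := by
  classical
  have hne : m ≠ 0 := by
    intro h0
    rw [h0] at h
    simp at h
  obtain ⟨i, hi⟩ := Finsupp.support_nonempty_iff.mpr hne
  have hile : m i ≤ 1 := h ▸ Finsupp.le_degree i m
  have hipos : m i ≠ 0 := Finsupp.mem_support_iff.mp hi
  have him : m i = 1 := by omega
  refine ⟨i, ?_⟩
  have hsub : m.support ⊆ {i} := by
    intro a ha
    by_contra hai
    simp only [Finset.mem_singleton] at hai
    have hpair : ({a, i} : Finset σ) ⊆ m.support := by
      intro x hx
      simp only [Finset.mem_insert, Finset.mem_singleton] at hx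
      rcases hx with rfl | rfl
      · exact ha
      · exact hi
    have h2 : m a + m i ≤ Finsupp.degree m := by
      rw [← Finset.sum_pair hai]
      exact Finset.sum_le_sum_of_subset hpair
    have hapos : m a ≠ 0 := Finsupp.mem_support_iff.mp ha
    omega
  have := Finsupp.support_subset_singleton.mp hsub
  rwa [him] at this

lemma pderiv_linear {n : ℕ} (j : Fin n) (v : Fin n → ℂ) :
    pderiv j (∑ i, v i • X i : MvPolynomial (Fin n) ℂ) = C (v j) := by
  rw [map_sum]
  rw [Finset.sum_eq_single j]
  · rw [(pderiv j).map_smul, pderiv_X_self, smul_eq_C_mul, mul_one]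
  · intro i _ hne
    rw [(pderiv j).map_smul, pderiv_X_of_ne hne, smul_zero]
  · intro h
    exact absurd (Finset.mem_univ j) h

lemma diffOp_pow_lin {n : ℕ} {α : MvPolynomial (Fin n) ℂ} (hα : α.IsHomogeneous 1)
    (v : Fin n → ℂ) (k : ℕ) :
    diffOp α ((∑ j, v j • X j : MvPolynomial (Fin n) ℂ) ^ k)
      = ((k : ℂ) * eval v α) • (∑ j, v j • X j : MvPolynomial (Fin n) ℂ) ^ (k - 1) := by
  set ℓ : MvPolynomial (Fin n) ℂ := ∑ j, v j • X j with hℓ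
  have key : ∀ m ∈ α.support, (coeff m α) • mderiv m (ℓ ^ k)
      = ((k : ℂ) * eval v (monomial m (coeff m α))) • ℓ ^ (k - 1) := by
    intro m hm
    have hdeg : Finsupp.degree m = 1 := by
      rw [Finsupp.degree_eq_weight_one]
      exact hα (MvPolynomial.mem_support_iff.mp hm)
    obtain ⟨j, rfl⟩ := eq_single_of_degree_one hdeg
    rw [mderiv_single, pderiv_pow, pderiv_linear, eval_monomial,
      Finsupp.prod_single_index (by simp), pow_one]
    rw [smul_eq_C_mul, smul_eq_C_mul, map_mul, map_mul]
    rw [show ((k : MvPolynomial (Fin n) ℂ)) = C ((k : ℂ)) from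
      (map_natCast (C : ℂ →+* MvPolynomial (Fin n) ℂ) k).symm]
    ring
  calc diffOp α (ℓ ^ k)
      = diffOp (∑ m ∈ α.support, monomial m (coeff m α)) (ℓ ^ k) := by rw [← as_sum]
    _ = ∑ m ∈ α.support, (coeff m α) • mderiv m (ℓ ^ k) := by
        rw [show diffOp (∑ m ∈ α.support, monomial m (coeff m α)) (ℓ ^ k)
            = diffOpT (ℓ ^ k) (∑ m ∈ α.support, monomial m (coeff m α)) from rfl, map_sum]
        exact Finset.sum_congr rfl fun m _ => by rw [diffOpT_apply, diffOp_monomial]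
    _ = ∑ m ∈ α.support, ((k : ℂ) * eval v (monomial m (coeff m α))) • ℓ ^ (k - 1) :=
        Finset.sum_congr rfl key
    _ = ((k : ℂ) * eval v α) • ℓ ^ (k - 1) := by
        conv_rhs => rw [as_sum α]
        rw [map_sum, Finset.mul_sum, Finset.sum_smul]

end Linear

section Span

lemma coeff_mem_of_forall {M : Type*} [AddCommGroup M] [Module ℂ M] (U : Submodule ℂ M)
    (N : ℕ) (w : ℕ → M) (h : ∀ t : ℂ, (∑ j ∈ Finset.range (N + 1), t ^ j • w j) ∈ U) :
    ∀ j, j ≤ N → w j ∈ U := by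
  intro j hj
  rw [← Submodule.Quotient.mk_eq_zero U]
  set m : ℕ → M ⧸ U := fun i => Submodule.Quotient.mk (w i) with hm
  have hms : ∀ t : ℂ, ∑ i ∈ Finset.range (N + 1), t ^ i • m i = 0 := by
    intro t
    have : U.mkQ (∑ i ∈ Finset.range (N + 1), t ^ i • w i) = 0 := by
      rw [Submodule.mkQ_apply, Submodule.Quotient.mk_eq_zero]
      exact h t
    rw [map_sum] at this
    simpa [hm, Submodule.mkQ_apply] using this
  show m j = 0
  rw [← Module.forall_dual_apply_eq_zero_iff ℂ]
  intro φ
  have hp : (∑ i ∈ Finset.range (N + 1), Polynomial.C (φ (m i)) * Polynomial.X ^ i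
      : Polynomial ℂ) = 0 := by
    apply Polynomial.funext
    intro t
    have h0 := congrArg φ (hms t)
    rw [map_sum, map_zero] at h0
    simp only [map_smul, smul_eq_mul] at h0
    simp only [Polynomial.eval_finset_sum, Polynomial.eval_mul, Polynomial.eval_C,
      Polynomial.eval_pow, Polynomial.eval_X, Polynomial.eval_zero]
    rw [← h0]
    exact Finset.sum_congr rfl fun i _ => mul_comm _ _
  have hc := congrArg (fun p => Polynomial.coeff p j) hp
  simp only [Polynomial.finset_sum_coeff, Polynomial.coeff_C_mul, Polynomial.coeff_X_pow,
    Polynomial.coeff_zero, mul_ite, mul_one, mul_zero] at hc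
  rwa [Finset.sum_ite_eq (Finset.range (N + 1)) j (fun i => φ (m i)),
    if_pos (Finset.mem_range.mpr (by omega))] at hc

/-- The span of `d`-th powers of linear forms. -/
noncomputable def powSpan (n d : ℕ) : Submodule ℂ (MvPolynomial (Fin n) ℂ) :=
  Submodule.span ℂ {P | ∃ v : Fin n → ℂ, P = (∑ j, v j • X j) ^ d}

lemma monomial_mul_pow_mem (n d : ℕ) :
    ∀ (m : ℕ), m ≤ d → ∀ (u : Fin n →₀ ℕ), Finsupp.degree u = m →
    ∀ v : Fin n → ℂ,
      (monomial u 1 : MvPolynomial (Fin n) ℂ) * (∑ j, v j • X j) ^ (d - m) ∈ powSpan n d := by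
  intro m
  induction m with
  | zero =>
      intro _ u hu v
      have hu0 : u = 0 := (Finsupp.degree_eq_zero_iff u).mp hu
      subst hu0
      rw [monomial_zero', map_one, one_mul, Nat.sub_zero]
      exact Submodule.subset_span ⟨v, rfl⟩
  | succ m ih =>
      intro hm u hu v
      classical
      have hne : u ≠ 0 := by
        intro h0
        rw [h0] at hu
        simp at hu
      obtain ⟨i, hi⟩ := Finsupp.support_nonempty_iff.mpr hne
      have hipos : u i ≠ 0 := Finsupp.mem_support_iff.mp hi
      set u' : Fin n →₀ ℕ := u - Finsupp.single i 1 with hu'def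
      have husplit : u = u' + Finsupp.single i 1 := by
        ext a
        simp only [hu'def, Finsupp.add_apply, Finsupp.tsub_apply, Finsupp.single_apply]
        by_cases hai : i = a
        · subst hai; simp; omega
        · simp [hai]
      have hu's : Finsupp.degree u' = m := by
        have : Finsupp.degree u = Finsupp.degree u' + Finsupp.degree (Finsupp.single i 1) := by
          rw [husplit, Finsupp.degree_eq_weight_one, map_add]
        have hds : Finsupp.degree (Finsupp.single i (1 : ℕ)) = 1 := by
          rw [Finsupp.degree_eq_weight_one, Finsupp.weight_apply,
            Finsupp.sum_single_index] <;> simp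
        rw [hu, hds] at this
        omega
      set ℓ : MvPolynomial (Fin n) ℂ := ∑ j, v j • X j with hℓ
      set D := d - m with hD
      have hD1 : 1 ≤ D := by omega
      have ht : ∀ t : ℂ, (∑ kk ∈ Finset.range (D + 1),
          t ^ kk • ((monomial u' 1 : MvPolynomial (Fin n) ℂ) *
            ((X i) ^ kk * ℓ ^ (D - kk) * (D.choose kk : MvPolynomial (Fin n) ℂ))))
          ∈ powSpan n d := by
        intro t
        have h0 := ih (by omega) u' hu's (v + t • (Pi.single i 1 : Fin n → ℂ))
        have hℓ' : (∑ j, (v + t • (Pi.single i 1 : Fin n → ℂ)) j • X j : MvPolynomial (Fin n) ℂ)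
            = t • X i + ℓ := by
          have hsummand : ∀ j : Fin n, ((v + t • (Pi.single i 1 : Fin n → ℂ)) j • X j : MvPolynomial (Fin n) ℂ)
              = v j • X j + (t * (Pi.single i 1 : Fin n → ℂ) j) • X j := by
            intro j
            rw [← add_smul]
            congr 1
          rw [Finset.sum_congr rfl (fun j _ => hsummand j), Finset.sum_add_distrib, add_comm, hℓ]
          congr 1
          rw [Finset.sum_eq_single i]
          · rw [Pi.single_eq_same, mul_one]
          · intro b _ hbne
            rw [Pi.single_eq_of_ne hbne, mul_zero, zero_smul]
          · intro hmem
            exact absurd (Finset.mem_univ i) hmem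
        rw [hℓ', add_pow, Finset.mul_sum] at h0
        have hterm : ∀ kk ∈ Finset.range (D + 1),
            t ^ kk • ((monomial u' 1 : MvPolynomial (Fin n) ℂ) *
              ((X i) ^ kk * ℓ ^ (D - kk) * (D.choose kk : MvPolynomial (Fin n) ℂ)))
            = (monomial u' 1 : MvPolynomial (Fin n) ℂ) *
              ((t • X i) ^ kk * ℓ ^ (D - kk) * (D.choose kk : MvPolynomial (Fin n) ℂ)) := by
          intro kk _
          rw [smul_pow, smul_mul_assoc, smul_mul_assoc, mul_smul_comm]
        rw [Finset.sum_congr rfl hterm]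
        exact h0
      have hw1 := coeff_mem_of_forall _ D _ ht 1 hD1
      rw [pow_one, Nat.choose_one_right] at hw1
      have hxu : (monomial u' 1 : MvPolynomial (Fin n) ℂ) * X i = monomial u 1 := by
        rw [X, monomial_mul, one_mul, ← husplit]
      have hmem : ((D : ℂ)) • ((monomial u 1 : MvPolynomial (Fin n) ℂ) * ℓ ^ (d - (m + 1)))
          ∈ powSpan n d := by
        have heq : ((D : ℂ)) • ((monomial u 1 : MvPolynomial (Fin n) ℂ) * ℓ ^ (d - (m + 1)))
            = (monomial u' 1 : MvPolynomial (Fin n) ℂ) *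
              (X i * ℓ ^ (D - 1) * (D : MvPolynomial (Fin n) ℂ)) := by
          rw [show d - (m + 1) = D - 1 from by omega, ← hxu, smul_eq_C_mul,
            show ((D : MvPolynomial (Fin n) ℂ)) = C ((D : ℂ)) from
              (map_natCast (C : ℂ →+* MvPolynomial (Fin n) ℂ) D).symm]
          ring
        rw [heq]
        exact hw1
      have hDne : ((D : ℂ)) ≠ 0 := Nat.cast_ne_zero.mpr (by omega)
      have hfin := Submodule.smul_mem (powSpan n d) (((D : ℂ))⁻¹) hmem
      rwa [inv_smul_smul₀ hDne] at hfin

end Span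

section Main

lemma finrank_eq_map_add_inf_ker {M M' : Type*} [AddCommGroup M] [Module ℂ M]
    [AddCommGroup M'] [Module ℂ M'] (L : M →ₗ[ℂ] M') (p : Submodule ℂ M)
    [FiniteDimensional ℂ p] :
    Module.finrank ℂ p
      = Module.finrank ℂ (p.map L) + Module.finrank ℂ ↥(p ⊓ LinearMap.ker L) := by
  have h := LinearMap.finrank_range_add_finrank_ker (L.domRestrict p)
  rw [LinearMap.range_domRestrict] at h
  rw [← h]
  congr 1
  rw [LinearMap.ker_domRestrict]
  have e1 : Submodule.comap p.subtype (LinearMap.ker L)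
      = Submodule.comap p.subtype (p ⊓ LinearMap.ker L) := by
    ext x
    simp [x.2]
  rw [e1]
  exact (Submodule.comapSubtypeEquivOfLe inf_le_left).finrank_eq

lemma exists_waring_decomp (n d : ℕ) (F : MvPolynomial (Fin n) ℂ) (hFd : F.IsHomogeneous d) :
    ∃ (r : ℕ) (c : Fin r → ℂ) (v : Fin r → Fin n → ℂ),
      F = ∑ i, c i • (∑ j, v i j • MvPolynomial.X j) ^ d := by
  have hmem : F ∈ powSpan n d := by
    rw [show F = ∑ k ∈ F.support, monomial k (coeff k F) from as_sum F]
    apply Submodule.sum_mem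
    intro k hk
    have hdeg : Finsupp.degree k = d := by
      rw [Finsupp.degree_eq_weight_one]
      exact hFd (MvPolynomial.mem_support_iff.mp hk)
    have h := monomial_mul_pow_mem n d d le_rfl k hdeg 0
    rw [Nat.sub_self, pow_zero, mul_one] at h
    have heq : (monomial k (coeff k F) : MvPolynomial (Fin n) ℂ)
        = (coeff k F) • monomial k 1 := by
      rw [smul_monomial, smul_eq_mul, mul_one]
    rw [heq]
    exact Submodule.smul_mem _ _ h
  rw [powSpan] at hmem
  obtain ⟨r, c, g, hg⟩ := Submodule.mem_span_set'.mp hmem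
  refine ⟨r, c, fun i => Classical.choose (g i).2, ?_⟩
  rw [← hg]
  apply Finset.sum_congr rfl
  intro i _
  congr 1
  exact Classical.choose_spec (g i).2

/-- For a nonzero homogeneous `F` of degree `d` and a linear form `α` in the dual
variables, `r(F) ≥ al(α∘F) − al(α²∘F)`. -/
theorem stmt3 (n d : ℕ) (F : MvPolynomial (Fin n) ℂ) (hF : F ≠ 0)
    (hFd : F.IsHomogeneous d)
    (α : MvPolynomial (Fin n) ℂ) (hα : α.IsHomogeneous 1) :
    apolarLength (diffOp α F) - apolarLength (diffOp (α ^ 2) F) ≤ waringRank d F := by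
  classical
  -- obtain a minimal decomposition
  set r := waringRank d F with hr
  obtain ⟨c, v, hdecomp⟩ : ∃ (c : Fin r → ℂ) (v : Fin r → Fin n → ℂ),
      F = ∑ i, c i • (∑ j, v i j • MvPolynomial.X j) ^ d := by
    obtain ⟨r₀, c₀, v₀, h₀⟩ := exists_waring_decomp n d F hFd
    exact Nat.sInf_mem (⟨r₀, c₀, v₀, h₀⟩ :
      {r : ℕ | ∃ (c : Fin r → ℂ) (v : Fin r → Fin n → ℂ),
        F = ∑ i, c i • (∑ j, v i j • MvPolynomial.X j) ^ d}.Nonempty)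
  set ℓ : Fin r → MvPolynomial (Fin n) ℂ := fun i => ∑ j, v i j • X j with hℓ
  set e : Fin r → ℂ := fun i => eval (v i) α with he
  set L := diffOpL (σ := Fin n) α with hL
  set G := diffOp α F with hG
  -- the auxiliary space V
  set SV : Set (MvPolynomial (Fin n) ℂ)
      := {P | ∃ i : Fin r, ∃ k : ℕ, k ≤ d - 1 ∧ e i ≠ 0 ∧ P = ℓ i ^ k} with hSV
  set V := Submodule.span ℂ SV with hV
  have hSVfin : SV.Finite := by
    apply Set.Finite.subset (Set.Finite.image (fun p : Fin r × ℕ => ℓ p.1 ^ p.2)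
      (Set.Finite.prod (Set.finite_univ) (Set.finite_Iic (d - 1))))
    rintro P ⟨i, k, hk, -, rfl⟩
    exact ⟨(i, k), ⟨Set.mem_univ i, hk⟩, rfl⟩
  haveI hVfin : FiniteDimensional ℂ V := FiniteDimensional.span_of_finite ℂ hSVfin
  -- V is stable under pderiv
  have hVpd : ∀ (j : Fin n), ∀ P ∈ V, pderiv j P ∈ V := by
    intro j P hP
    induction hP using Submodule.span_induction with
    | mem x hx =>
        obtain ⟨i, k, hk, hei, rfl⟩ := hx
        rw [← diffOp_X, diffOp_pow_lin (isHomogeneous_X ℂ j) (v i) k]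
        exact Submodule.smul_mem _ _ (Submodule.subset_span
          ⟨i, k - 1, le_trans (Nat.sub_le k 1) hk, hei, rfl⟩)
    | zero => rw [map_zero]; exact Submodule.zero_mem _
    | add x y _ _ hx hy => rw [map_add]; exact Submodule.add_mem _ hx hy
    | smul a x _ hx => rw [(pderiv j).map_smul]; exact Submodule.smul_mem _ _ hx
  -- V is stable under all mderiv
  have hVmd : ∀ (N : ℕ) (m : Fin n →₀ ℕ), Finsupp.degree m ≤ N → ∀ P ∈ V, mderiv m P ∈ V := by
    intro N
    induction N with
    | zero =>
        intro m hm P hP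
        have : m = 0 := (Finsupp.degree_eq_zero_iff m).mp (Nat.le_zero.mp hm)
        rw [this, mderiv_zero]
        exact hP
    | succ N ih =>
        intro m hm P hP
        by_cases h0 : m = 0
        · rw [h0, mderiv_zero]; exact hP
        · obtain ⟨j, hj⟩ := Finsupp.support_nonempty_iff.mpr h0
          have hjpos : m j ≠ 0 := Finsupp.mem_support_iff.mp hj
          have hsplit : m = (m - Finsupp.single j 1) + Finsupp.single j 1 := by
            ext a
            simp only [Finsupp.add_apply, Finsupp.tsub_apply, Finsupp.single_apply]
            by_cases haj : j = a
            · subst haj; simp; omega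
            · simp [haj]
          have hdm : Finsupp.degree (m - Finsupp.single j 1) ≤ N := by
            have h1 : Finsupp.degree m
                = Finsupp.degree (m - Finsupp.single j 1)
                  + Finsupp.degree (Finsupp.single j (1 : ℕ)) := by
              conv_lhs => rw [hsplit]
              rw [Finsupp.degree_eq_weight_one, map_add]
            have hds : Finsupp.degree (Finsupp.single j (1 : ℕ)) = 1 := by
              rw [Finsupp.degree_eq_weight_one, Finsupp.weight_apply,
                Finsupp.sum_single_index] <;> simp
            omega
          rw [hsplit, ← mderiv_mderiv, mderiv_single]
          exact ih _ hdm _ (hVpd j P hP)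
  -- V is stable under all diffOp
  have hVdiff : ∀ (Θ : MvPolynomial (Fin n) ℂ), ∀ P ∈ V, diffOp Θ P ∈ V := by
    intro Θ P hP
    rw [diffOp, Finsupp.sum]
    apply Submodule.sum_mem
    intro m _
    exact Submodule.smul_mem _ _ (hVmd (Finsupp.degree m) m le_rfl P hP)
  -- G lies in V
  have hGsum : G = ∑ i, (c i * ((d : ℂ) * e i)) • (ℓ i) ^ (d - 1) := by
    rw [hG, hdecomp, show diffOp α (∑ i, c i • (ℓ i) ^ d)
        = diffOpL α (∑ i, c i • (ℓ i) ^ d) from rfl, map_sum]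
    apply Finset.sum_congr rfl
    intro i _
    rw [map_smul, diffOpL_apply, diffOp_pow_lin hα (v i) d, smul_smul]
  have hGV : G ∈ V := by
    rw [hGsum]
    apply Submodule.sum_mem
    intro i _
    by_cases hei : e i = 0
    · rw [hei]
      simp
    · exact Submodule.smul_mem _ _ (Submodule.subset_span ⟨i, d - 1, le_rfl, hei, rfl⟩)
  -- D = span of derivatives of G
  set D := DiffSpan G with hD
  have hDV : D ≤ V := by
    rw [hD, DiffSpan, Submodule.span_le]
    rintro P ⟨Θ, rfl⟩
    exact hVdiff Θ G hGV
  haveI hDfin : FiniteDimensional ℂ D := Submodule.finiteDimensional_of_le hDV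
  -- top layer
  set Vtop := Submodule.span ℂ (Set.range fun i : Fin r => (ℓ i) ^ (d - 1)) with hVtop
  haveI : FiniteDimensional ℂ Vtop :=
    FiniteDimensional.span_of_finite ℂ (Set.finite_range _)
  have hVtopr : Module.finrank ℂ Vtop ≤ r := by
    have := finrank_range_le_card (R := ℂ) (fun i : Fin r => (ℓ i) ^ (d - 1))
    rw [Set.finrank] at this
    simpa using this
  -- V ≤ Vtop ⊔ map L V
  have hVsub : V ≤ Vtop ⊔ Submodule.map L V := by
    rw [hV, Submodule.span_le]
    rintro P ⟨i, k, hk, hei, rfl⟩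
    rcases eq_or_lt_of_le hk with hkd | hkd
    · subst hkd
      exact Submodule.mem_sup_left (Submodule.subset_span ⟨i, rfl⟩)
    · have hk1 : k + 1 ≤ d - 1 := hkd
      have hmap : L ((ℓ i) ^ (k + 1)) = (((k + 1 : ℕ) : ℂ) * e i) • (ℓ i) ^ k := by
        rw [hL, diffOpL_apply, diffOp_pow_lin hα (v i) (k + 1), Nat.add_sub_cancel]
      have hmem : (((k + 1 : ℕ) : ℂ) * e i) • (ℓ i) ^ k ∈ Submodule.map L V := by
        rw [← hmap]
        exact Submodule.mem_map_of_mem (Submodule.subset_span ⟨i, k + 1, hk1, hei, rfl⟩)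
      have hne : (((k + 1 : ℕ) : ℂ) * e i) ≠ 0 :=
        mul_ne_zero (Nat.cast_ne_zero.mpr (Nat.succ_ne_zero k)) hei
      have : (ℓ i) ^ k = (((k + 1 : ℕ) : ℂ) * e i)⁻¹ • ((((k + 1 : ℕ) : ℂ) * e i) • (ℓ i) ^ k) :=
        (inv_smul_smul₀ hne _).symm
      rw [this]
      exact Submodule.mem_sup_right (Submodule.smul_mem _ _ hmem)
  -- rank-nullity bookkeeping
  have hDeq := finrank_eq_map_add_inf_ker L D
  have hVeq := finrank_eq_map_add_inf_ker L V
  haveI : FiniteDimensional ℂ ↥(V ⊓ LinearMap.ker L) :=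
    Submodule.finiteDimensional_of_le inf_le_left
  have hkermono : Module.finrank ℂ ↥(D ⊓ LinearMap.ker L)
      ≤ Module.finrank ℂ ↥(V ⊓ LinearMap.ker L) :=
    Submodule.finrank_mono (inf_le_inf_right _ hDV)
  have hVle : Module.finrank ℂ V ≤ r + Module.finrank ℂ (Submodule.map L V) := by
    have h1 : Module.finrank ℂ V ≤ Module.finrank ℂ ↥(Vtop ⊔ Submodule.map L V) :=
      Submodule.finrank_mono hVsub
    have h2 := Submodule.finrank_sup_add_finrank_inf_eq Vtop (Submodule.map L V)
    omega
  -- identify the two apolar lengths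
  have halG : apolarLength G = Module.finrank ℂ D := rfl
  have halG2 : apolarLength (diffOp (α ^ 2) F) = Module.finrank ℂ (Submodule.map L D) := by
    have h2 : diffOp (α ^ 2) F = diffOp α G := by
      rw [pow_two, diffOp_mul, hG]
    rw [apolarLength, h2, show Submodule.span ℂ (Set.range fun Θ => diffOp Θ (diffOp α G))
        = DiffSpan (diffOp α G) from rfl, DiffSpan_map, ← hL, ← hD]
  rw [halG, halG2]
  omega

end Main
end

section
/- Let n ≥ 2 and let 1 ≤ a_1 ≤ a_2 ≤ … ≤ a_n be integers. Then the Waring rank of the monomial x_1^{a_1} x_2^{a_2} ⋯ x_n^{a_n} satisfies r(x_1^{a_1} ⋯ x_n^{a_n}) ≥ (a_2 + 1)(a_3 + 1) ⋯ (a_n + 1). -/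
open MvPolynomial

open Finset

namespace Stmt10

attribute [local instance] Classical.propDecidable

noncomputable section

variable {n : ℕ}

def toF (b : Fin n → ℕ) : Fin n →₀ ℕ := Finsupp.equivFunOnFinite.symm b

@[simp] lemma toF_apply (b : Fin n → ℕ) (j : Fin n) : toF b j = b j := rfl

lemma toF_inj : Function.Injective (toF (n := n)) :=
  Finsupp.equivFunOnFinite.symm.injective

@[simp] lemma toF_coe (u : Fin n →₀ ℕ) : toF (⇑u) = u :=
  Finsupp.equivFunOnFinite.symm_apply_apply u

def lin (z : Fin n → ℂ) : MvPolynomial (Fin n) ℂ := ∑ j, C (z j) * X j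

lemma prodXpow (k : Fin n → ℕ) :
    (∏ j, (X j : MvPolynomial (Fin n) ℂ) ^ k j) = monomial (toF k) 1 := by
  rw [← prod_X_pow_eq_monomial]
  refine (Finset.prod_subset (Finset.subset_univ _) ?_).symm
  intro x _ hx
  have : toF k x = 0 := Finsupp.notMem_support_iff.mp hx
  simp only [toF_apply] at this
  simp [this]

lemma lin_pow_expand (z : Fin n → ℂ) (d : ℕ) :
    lin z ^ d = ∑ k ∈ Finset.piAntidiag Finset.univ d,
      monomial (toF k) ((Nat.multinomial Finset.univ k : ℂ) * ∏ j, z j ^ k j) := by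
  rw [lin, Finset.sum_pow_eq_sum_piAntidiag]
  refine Finset.sum_congr rfl fun k _ => ?_
  have h1 : ∀ j : Fin n, (C (z j) * X j) ^ k j
      = C (z j ^ k j) * (X j : MvPolynomial (Fin n) ℂ) ^ k j := by
    intro j; rw [mul_pow, ← C_pow]
  rw [Finset.prod_congr rfl fun j _ => h1 j, Finset.prod_mul_distrib, ← map_prod, prodXpow,
    C_mul_monomial, mul_one]
  have : ((Nat.multinomial Finset.univ k : ℕ) : MvPolynomial (Fin n) ℂ)
      = C ((Nat.multinomial Finset.univ k : ℕ) : ℂ) := by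
    simp
  rw [this, C_mul_monomial]

lemma coeff_lin_pow (z : Fin n → ℂ) (d : ℕ) (u : Fin n →₀ ℕ) (hu : ∑ j, u j = d) :
    coeff u (lin z ^ d) = (Nat.multinomial Finset.univ ⇑u : ℂ) * ∏ j, z j ^ u j := by
  rw [lin_pow_expand, coeff_sum]
  rw [Finset.sum_eq_single_of_mem (⇑u) ?memu ?hother]
  · rw [coeff_monomial, if_pos (toF_coe u)]
  case memu =>
    rw [Finset.mem_piAntidiag]
    exact ⟨hu, fun i _ => Finset.mem_univ i⟩
  case hother =>
    intro k _ hk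
    rw [coeff_monomial, if_neg]
    intro h
    exact hk (funext fun j => by
      have := congrArg (fun f => f j) h
      simpa using this)



set_option synthInstance.maxHeartbeats 1000000 in
/-- coefficient-extraction into span lemma -/
lemma span_extract (K : Finset (Fin n → ℕ))
    (cf : (Fin n → ℕ) → MvPolynomial (Fin n) ℂ) (k₀ : Fin n → ℕ) (hk₀ : k₀ ∈ K) :
    cf k₀ ∈ Submodule.span ℂ
      (Set.range fun t : Fin n → ℂ => ∑ k ∈ K, (∏ j, t j ^ k j) • cf k) := by
  by_contra hns
  set W := Submodule.span ℂ
      (Set.range fun t : Fin n → ℂ => ∑ k ∈ K, (∏ j, t j ^ k j) • cf k) with hW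
  set q := W.mkQ with hq
  have hq0 : q (cf k₀) ≠ 0 := by
    intro h
    rw [hq, Submodule.mkQ_apply, Submodule.Quotient.mk_eq_zero] at h
    exact hns h
  obtain ⟨g, hg⟩ := LinearMap.exists_leftInverse_of_injective
      (LinearMap.toSpanSingleton ℂ _ (q (cf k₀)))
      (LinearMap.ker_toSpanSingleton ℂ hq0)
  set φ : MvPolynomial (Fin n) ℂ →ₗ[ℂ] ℂ := g.comp q with hφ
  have hφ1 : φ (cf k₀) = 1 := by
    have := congrArg (fun h => h (1 : ℂ)) hg
    simpa [LinearMap.toSpanSingleton, hφ] using this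
  have hφW : ∀ x ∈ W, φ x = 0 := by
    intro x hx
    have : q x = 0 := by
      rw [hq, Submodule.mkQ_apply, Submodule.Quotient.mk_eq_zero]; exact hx
    simp [hφ, this]
  have hev : ∀ t : Fin n → ℂ,
      MvPolynomial.eval t (∑ k ∈ K, monomial (toF k) (φ (cf k))) = 0 := by
    intro t
    have hmem : (∑ k ∈ K, (∏ j, t j ^ k j) • cf k) ∈ W :=
      Submodule.subset_span (Set.mem_range_self t)
    have h0 := hφW _ hmem
    rw [map_sum] at h0
    rw [map_sum]
    rw [← h0]
    refine Finset.sum_congr rfl fun k _ => ?_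
    rw [eval_monomial, map_smul, smul_eq_mul, mul_comm]
    congr 1
    rw [Finsupp.prod_pow]
    simp
  have hzero : (∑ k ∈ K, monomial (toF k) (φ (cf k))) = 0 :=
    MvPolynomial.funext (by simpa using hev)
  have hco := congrArg (coeff (toF k₀)) hzero
  rw [coeff_sum, Finset.sum_eq_single_of_mem k₀ hk₀ ?other] at hco
  · rw [coeff_monomial, if_pos rfl] at hco
    rw [hφ1] at hco
    simp at hco
  case other =>
    intro k _ hk
    rw [coeff_monomial, if_neg]
    intro h
    exact hk (funext fun j => by
      have := congrArg (fun f => f j) h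
      simpa using this)


lemma exists_decomp (a : Fin n → ℕ) :
    ∃ (r₀ : ℕ) (c : Fin r₀ → ℂ) (v : Fin r₀ → Fin n → ℂ),
      (monomial (toF a) 1 : MvPolynomial (Fin n) ℂ) = ∑ i, c i • lin (v i) ^ (∑ j, a j) := by
  set d := ∑ j, a j with hd
  set cf : (Fin n → ℕ) → MvPolynomial (Fin n) ℂ :=
    fun k => monomial (toF k) ((Nat.multinomial Finset.univ k : ℂ)) with hcf
  have hexp : ∀ t : Fin n → ℂ, (∑ k ∈ Finset.piAntidiag Finset.univ d,
      (∏ j, t j ^ k j) • cf k) = lin t ^ d := by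
    intro t
    rw [lin_pow_expand]
    refine Finset.sum_congr rfl fun k _ => ?_
    rw [hcf, smul_monomial, smul_eq_mul, mul_comm]
  have hmem : cf a ∈ Submodule.span ℂ (Set.range fun t : Fin n → ℂ => lin t ^ d) := by
    have h := span_extract (Finset.piAntidiag Finset.univ d) cf a
      (by rw [Finset.mem_piAntidiag]; exact ⟨rfl, fun i _ => Finset.mem_univ i⟩)
    have hre : (Set.range fun t : Fin n → ℂ => ∑ k ∈ Finset.piAntidiag Finset.univ d,
        (∏ j, t j ^ k j) • cf k) = (Set.range fun t : Fin n → ℂ => lin t ^ d) := by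
      have : (fun t : Fin n → ℂ => ∑ k ∈ Finset.piAntidiag Finset.univ d,
          (∏ j, t j ^ k j) • cf k) = (fun t : Fin n → ℂ => lin t ^ d) := _root_.funext hexp
      rw [this]
    rwa [hre] at h
  have hmono : (monomial (toF a) (1:ℂ))
      ∈ Submodule.span ℂ (Set.range fun t : Fin n → ℂ => lin t ^ d) := by
    have hne : ((Nat.multinomial Finset.univ a : ℕ) : ℂ) ≠ 0 :=
      Nat.cast_ne_zero.mpr (Nat.multinomial_pos _ _).ne'
    have h2 := Submodule.smul_mem _ (((Nat.multinomial Finset.univ a : ℕ) : ℂ))⁻¹ hmem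
    rw [hcf] at h2
    simp only [smul_monomial, smul_eq_mul] at h2
    rwa [inv_mul_cancel₀ hne] at h2
  rw [Submodule.mem_span_set'] at hmono
  obtain ⟨m, f, g, hfg⟩ := hmono
  refine ⟨m, f, fun i => Classical.choose (Set.mem_range.mp (g i).2), ?_⟩
  rw [← hfg]
  refine Finset.sum_congr rfl fun i _ => ?_
  congr 1
  exact (Classical.choose_spec (Set.mem_range.mp (g i).2)).symm

lemma VL {r d : ℕ} (a : Fin n → ℕ) (c : Fin r → ℂ) (v : Fin r → Fin n → ℂ)
    (hd : d = ∑ j, a j)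
    (hF : (monomial (toF a) 1 : MvPolynomial (Fin n) ℂ) = ∑ i, c i • lin (v i) ^ d)
    (Γ : MvPolynomial (Fin n) ℂ) (k : ℕ)
    (hhom : ∀ m' ∈ Γ.support, ∑ j, m' j = k)
    (hev : ∀ i, eval (v i) Γ = 0)
    (m : Fin n → ℕ) (hm : ∀ j, m j ≤ a j) (hmk : ∑ j, m j = k) :
    coeff (toF m) Γ = 0 := by
  by_cases hms : toF m ∈ Γ.support
  case neg => exact notMem_support_iff.mp hms
  set s : Fin n → ℕ := fun j => a j - m j with hs
  have hsm : ∀ j, m j + s j = a j := fun j => by have := hm j; simp [hs]; omega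
  have hks : k + ∑ j, s j = d := by
    rw [hd]
    calc k + ∑ j, s j = (∑ j, m j) + ∑ j, s j := by rw [hmk]
    _ = ∑ j, (m j + s j) := by rw [Finset.sum_add_distrib]
    _ = ∑ j, a j := Finset.sum_congr rfl fun j _ => hsm j
  set ψ : MvPolynomial (Fin n) ℂ → ℂ := fun G => ∑ m' ∈ Γ.support,
    coeff m' Γ * (∏ j, ((m' j + s j).factorial : ℂ)) * coeff (m' + toF s) G with hψ
  have hL : ψ (monomial (toF a) 1)
      = coeff (toF m) Γ * ∏ j, ((m j + s j).factorial : ℂ) := by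
    simp only [hψ]
    rw [Finset.sum_eq_single_of_mem (toF m) hms (fun m' _ hne => ?_)]
    · rw [coeff_monomial, if_pos ?heq, mul_one]
      case heq =>
        ext j
        simp only [Finsupp.add_apply, toF_apply]
        exact (hsm j).symm
      simp only [toF_apply]
    · rw [coeff_monomial, if_neg, mul_zero]
      intro heq
      apply hne
      ext j
      have h1 := congrArg (fun f => f j) heq
      simp only [Finsupp.add_apply, toF_apply] at h1 ⊢
      have := hsm j
      omega
  have hR : ψ (∑ i, c i • lin (v i) ^ d) = 0 := by
    simp only [hψ]
    have hco : ∀ (m'' : Fin n →₀ ℕ), coeff m'' (∑ i, c i • lin (v i) ^ d)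
        = ∑ i, c i * coeff m'' (lin (v i) ^ d) := by
      intro m''
      rw [coeff_sum]
      exact Finset.sum_congr rfl fun i _ => by rw [coeff_smul, smul_eq_mul]
    simp only [hco, Finset.mul_sum]
    rw [Finset.sum_comm]
    refine Finset.sum_eq_zero fun i _ => ?_
    have hterm : ∀ m' ∈ Γ.support,
        coeff m' Γ * (∏ j, ((m' j + s j).factorial : ℂ))
          * (c i * coeff (m' + toF s) (lin (v i) ^ d))
        = (c i * (d.factorial : ℂ) * ∏ j, v i j ^ s j)
            * (coeff m' Γ * ∏ j, v i j ^ m' j) := by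
      intro m' hm'
      have hu : ∑ j, (m' + toF s) j = d := by
        simp only [Finsupp.add_apply, toF_apply]
        rw [Finset.sum_add_distrib, hhom m' hm', hks]
      rw [coeff_lin_pow _ _ _ hu]
      have hspec := Nat.multinomial_spec (s := Finset.univ) (f := ⇑(m' + toF s))
      have hsum : ∑ j, (m' + toF s) j = d := hu
      rw [hsum] at hspec
      have hfacmul : (∏ j, ((m' j + s j).factorial : ℂ))
          * (Nat.multinomial Finset.univ ⇑(m' + toF s) : ℂ) = (d.factorial : ℂ) := by
        have : (∏ j, ((m' + toF s) j).factorial) * Nat.multinomial Finset.univ ⇑(m' + toF s)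
            = d.factorial := hspec
        calc (∏ j, ((m' j + s j).factorial : ℂ))
            * (Nat.multinomial Finset.univ ⇑(m' + toF s) : ℂ)
            = ((∏ j, ((m' + toF s) j).factorial : ℕ) : ℂ)
              * (Nat.multinomial Finset.univ ⇑(m' + toF s) : ℂ) := by
              push_cast
              simp [Finsupp.add_apply, toF_apply]
        _ = (d.factorial : ℂ) := by rw [← Nat.cast_mul, this]
      have hpow : (∏ j, v i j ^ (m' + toF s) j)
          = (∏ j, v i j ^ m' j) * ∏ j, v i j ^ s j := by
        rw [← Finset.prod_mul_distrib]
        exact Finset.prod_congr rfl fun j _ => by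
          simp [Finsupp.add_apply, toF_apply, pow_add]
      rw [hpow, ← hfacmul]
      ring
    rw [Finset.sum_congr rfl hterm, ← Finset.mul_sum]
    have heval : ∑ m' ∈ Γ.support, coeff m' Γ * ∏ j, v i j ^ m' j = eval (v i) Γ :=
      (eval_eq' (v i) Γ).symm
    rw [heval, hev i, mul_zero]
  have hψF := congrArg ψ hF
  rw [hL, hR] at hψF
  have hfac : (∏ j, ((m j + s j).factorial : ℂ)) ≠ 0 :=
    Finset.prod_ne_zero_iff.mpr fun j _ => Nat.cast_ne_zero.mpr (Nat.factorial_ne_zero _)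
  exact (mul_eq_zero.mp hψF).resolve_right hfac

def degf (b : Fin n → ℕ) : ℕ := ∑ j, b j

def Box (i0 : Fin n) (a : Fin n → ℕ) : Finset (Fin n → ℕ) :=
  Fintype.piFinset fun j => Finset.range (if j = i0 then 1 else a j + 1)

def Dlt (i0 : Fin n) (t : ℕ) : Finset (Fin n → ℕ) :=
  (Fintype.piFinset fun _ => Finset.range (t + 1)).filter fun b => b i0 = 0 ∧ degf b < t

def wv {r : ℕ} (v : Fin r → Fin n → ℂ) (i0 : Fin n) (b : Fin n → ℕ) :
    {i : Fin r // v i i0 = 1} → ℂ := fun i => ∏ j, v i.1 j ^ b j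

lemma mem_Box_iff (i0 : Fin n) (a : Fin n → ℕ) (b : Fin n → ℕ) :
    b ∈ Box i0 a ↔ (b i0 = 0 ∧ ∀ j, b j ≤ a j) := by
  rw [Box, Fintype.mem_piFinset]
  constructor
  · intro h
    have h0 := h i0
    rw [if_pos rfl, Finset.mem_range] at h0
    refine ⟨by omega, fun j => ?_⟩
    by_cases hj : j = i0
    · subst hj; omega
    · have := h j
      rw [if_neg hj, Finset.mem_range] at this
      omega
  · rintro ⟨h0, h1⟩ j
    by_cases hj : j = i0
    · subst hj; simp [h0]
    · rw [if_neg hj, Finset.mem_range]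
      have := h1 j
      omega

lemma mem_Dlt_iff (i0 : Fin n) (t : ℕ) (b : Fin n → ℕ) :
    b ∈ Dlt i0 t ↔ (b i0 = 0 ∧ degf b < t) := by
  rw [Dlt, Finset.mem_filter]
  constructor
  · exact fun h => h.2
  · intro h
    refine ⟨?_, h⟩
    rw [Fintype.mem_piFinset]
    intro j
    rw [Finset.mem_range]
    have hle : b j ≤ degf b := Finset.single_le_sum (fun i _ => Nat.zero_le _) (Finset.mem_univ j)
    omega

lemma degf_erase (i0 : Fin n) (b : Fin n → ℕ) (h0 : b i0 = 0) :
    degf b = ∑ j ∈ Finset.univ.erase i0, b j := by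
  rw [degf, ← Finset.add_sum_erase Finset.univ b (Finset.mem_univ i0), h0, zero_add]

lemma KL {r d : ℕ} (i0 : Fin n) (a : Fin n → ℕ) (ha : ∀ j, 1 ≤ a j)
    (c : Fin r → ℂ) (v : Fin r → Fin n → ℂ)
    (hd : d = ∑ j, a j)
    (hF : (monomial (toF a) 1 : MvPolynomial (Fin n) ℂ) = ∑ i, c i • lin (v i) ^ d)
    (hdich : ∀ i, v i i0 = 0 ∨ v i i0 = 1)
    (t : ℕ) (lam : (Fin n → ℕ) → ℂ)
    (hmem : (∑ b ∈ (Box i0 a).filter (fun b => degf b = t), lam b • wv v i0 b)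
      ∈ Submodule.span ℂ (Set.range fun b' : ↥(Dlt i0 t) => wv v i0 b'.1)) :
    ∀ b₀ ∈ (Box i0 a).filter (fun b => degf b = t), lam b₀ = 0 := by
  intro b₀ hb₀
  set I1 := (Box i0 a).filter (fun b => degf b = t) with hI1
  obtain ⟨μ, hμ⟩ := (Submodule.mem_span_range_iff_exists_fun ℂ).mp hmem
  set μ' : (Fin n → ℕ) → ℂ := fun b => if h : b ∈ Dlt i0 t then μ ⟨b, h⟩ else 0 with hμ'
  have hμsum : ∑ b ∈ Dlt i0 t, μ' b • wv v i0 b = ∑ b ∈ I1, lam b • wv v i0 b := by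
    rw [← hμ, ← Finset.sum_coe_sort (Dlt i0 t) (fun b => μ' b • wv v i0 b)]
    exact Finset.sum_congr rfl fun b _ => by simp [hμ', dif_pos b.2]
  set E : (Fin n → ℕ) → (Fin n → ℕ) := fun b j => if j = i0 then t + 1 - degf b else b j with hE
  set γ : (Fin n → ℕ) → ℂ := fun b => if b ∈ I1 then lam b else -μ' b with hγ
  have hdisj : Disjoint I1 (Dlt i0 t) := by
    rw [Finset.disjoint_left]
    intro b h1 h2
    have hd1 := (Finset.mem_filter.mp h1).2
    have hd2 := ((mem_Dlt_iff i0 t b).mp h2).2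
    omega
  set Γ : MvPolynomial (Fin n) ℂ := ∑ b ∈ I1 ∪ Dlt i0 t, monomial (toF (E b)) (γ b) with hΓ
  have hprop : ∀ b ∈ I1 ∪ Dlt i0 t, b i0 = 0 ∧ degf b ≤ t := by
    intro b hb
    rcases Finset.mem_union.mp hb with h | h
    · obtain ⟨hbox, hdeg⟩ := Finset.mem_filter.mp h
      exact ⟨((mem_Box_iff i0 a b).mp hbox).1, le_of_eq hdeg⟩
    · obtain ⟨h0, hlt⟩ := (mem_Dlt_iff i0 t b).mp h
      exact ⟨h0, le_of_lt hlt⟩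
  have hEinj : ∀ b ∈ I1 ∪ Dlt i0 t, ∀ b' ∈ I1 ∪ Dlt i0 t, E b = E b' → b = b' := by
    intro b hb b' hb' hEe
    funext j
    by_cases hj : j = i0
    · subst hj; rw [(hprop b hb).1, (hprop b' hb').1]
    · have hcj := congrFun hEe j
      rw [hE] at hcj
      simpa [if_neg hj] using hcj
  have hsum_E : ∀ b ∈ I1 ∪ Dlt i0 t, ∑ j, E b j = t + 1 := by
    intro b hb
    obtain ⟨h0, hle⟩ := hprop b hb
    have h1 : ∑ j, E b j = E b i0 + ∑ j ∈ Finset.univ.erase i0, E b j :=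
      (Finset.add_sum_erase Finset.univ (E b) (Finset.mem_univ i0)).symm
    have h2 : ∑ j ∈ Finset.univ.erase i0, E b j = ∑ j ∈ Finset.univ.erase i0, b j :=
      Finset.sum_congr rfl fun j hj => by
        rw [hE]; simp [if_neg (Finset.ne_of_mem_erase hj)]
    have h3 := degf_erase i0 b h0
    rw [h1, h2]
    have h4 : E b i0 = t + 1 - degf b := by rw [hE]; simp
    rw [h4, ← h3]
    omega
  have hcoeffΓ : ∀ b ∈ I1 ∪ Dlt i0 t, coeff (toF (E b)) Γ = γ b := by
    intro b hb
    rw [hΓ, coeff_sum]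
    rw [Finset.sum_eq_single_of_mem b hb (fun b' hb' hne => ?_)]
    · rw [coeff_monomial, if_pos rfl]
    · rw [coeff_monomial, if_neg]
      intro h
      exact hne (hEinj b' hb' b hb (toF_inj h))
  have hsupp : ∀ m' ∈ Γ.support, ∑ j, m' j = t + 1 := by
    intro m' hm'
    have hne : coeff m' Γ ≠ 0 := mem_support_iff.mp hm'
    rw [hΓ, coeff_sum] at hne
    obtain ⟨b, hb, hbne⟩ := Finset.exists_ne_zero_of_sum_ne_zero hne
    rw [coeff_monomial] at hbne
    by_cases hq : toF (E b) = m'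
    · rw [← hq]
      simp only [toF_apply]
      exact hsum_E b hb
    · rw [if_neg hq] at hbne
      exact absurd rfl hbne
  have hevalΓ : ∀ i, eval (v i) Γ = 0 := by
    intro i
    rw [hΓ, map_sum]
    have heachm : ∀ b, eval (v i) (monomial (toF (E b)) (γ b)) = γ b * ∏ j, v i j ^ E b j := by
      intro b
      rw [eval_monomial, Finsupp.prod_pow]
      rfl
    rcases hdich i with h0 | h1
    · refine Finset.sum_eq_zero fun b hb => ?_
      rw [heachm]
      have hz : v i i0 ^ E b i0 = 0 := by
        have hE0 : E b i0 = t + 1 - degf b := by rw [hE]; simp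
        have := (hprop b hb).2
        rw [h0, hE0, zero_pow (by omega)]
      rw [Finset.prod_eq_zero (Finset.mem_univ i0) hz, mul_zero]
    · set ii : {i' : Fin r // v i' i0 = 1} := ⟨i, h1⟩ with hii
      have hw : ∀ b ∈ I1 ∪ Dlt i0 t,
          eval (v i) (monomial (toF (E b)) (γ b)) = γ b * wv v i0 b ii := by
        intro b hb
        rw [heachm]
        congr 1
        have e1 : ∏ j, v i j ^ E b j
            = v i i0 ^ (E b i0) * ∏ j ∈ Finset.univ.erase i0, v i j ^ E b j :=
          (Finset.mul_prod_erase Finset.univ _ (Finset.mem_univ i0)).symm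
        have e2 : (wv v i0 b ii : ℂ)
            = v i i0 ^ (b i0) * ∏ j ∈ Finset.univ.erase i0, v i j ^ b j :=
          (Finset.mul_prod_erase Finset.univ _ (Finset.mem_univ i0)).symm
        rw [e1, e2, h1, one_pow, one_pow, one_mul, one_mul]
        refine Finset.prod_congr rfl fun j hj => ?_
        rw [hE]
        simp [if_neg (Finset.ne_of_mem_erase hj)]
      rw [Finset.sum_congr rfl hw, Finset.sum_union hdisj]
      have hA : ∑ b ∈ I1, γ b * wv v i0 b ii = ∑ b ∈ I1, lam b * wv v i0 b ii :=
        Finset.sum_congr rfl fun b hb => by simp only [hγ]; rw [if_pos hb]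
      have hB : ∑ b ∈ Dlt i0 t, γ b * wv v i0 b ii
          = -∑ b ∈ Dlt i0 t, μ' b * wv v i0 b ii := by
        rw [← Finset.sum_neg_distrib]
        refine Finset.sum_congr rfl fun b hb => ?_
        simp only [hγ]
        rw [if_neg (Finset.disjoint_right.mp hdisj hb), neg_mul]
      rw [hA, hB]
      have hpt := congrFun hμsum ii
      simp only [Finset.sum_apply, Pi.smul_apply, smul_eq_mul] at hpt
      rw [hpt]
      ring
  obtain ⟨hb₀Box, hb₀deg⟩ := Finset.mem_filter.mp hb₀
  obtain ⟨hb₀0, hb₀le⟩ := (mem_Box_iff i0 a b₀).mp hb₀Box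
  have hm : ∀ j, E b₀ j ≤ a j := by
    intro j
    by_cases hj : j = i0
    · have hE0 : E b₀ j = t + 1 - degf b₀ := by rw [hE]; simp [hj]
      have hdeg : degf b₀ = t := hb₀deg
      have h1j := ha j
      omega
    · rw [hE]
      simp only [if_neg hj]
      exact hb₀le j
  have hmk : ∑ j, E b₀ j = t + 1 := hsum_E b₀ (Finset.mem_union_left _ hb₀)
  have hVL := VL a c v hd hF Γ (t + 1) hsupp hevalΓ (E b₀) hm hmk
  rw [hcoeffΓ b₀ (Finset.mem_union_left _ hb₀)] at hVL
  rw [hγ] at hVL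
  simpa [if_pos hb₀] using hVL

lemma main_bound {r d : ℕ} (i0 : Fin n) (a : Fin n → ℕ) (ha : ∀ j, 1 ≤ a j)
    (c : Fin r → ℂ) (v : Fin r → Fin n → ℂ)
    (hd : d = ∑ j, a j)
    (hF : (monomial (toF a) 1 : MvPolynomial (Fin n) ℂ) = ∑ i, c i • lin (v i) ^ d)
    (hdich : ∀ i, v i i0 = 0 ∨ v i i0 = 1) :
    (Box i0 a).card ≤ r := by
  have hindep : LinearIndependent ℂ (fun b : ↥(Box i0 a) => wv v i0 b.1) := by
    rw [Fintype.linearIndependent_iff]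
    intro g hg
    set g' : (Fin n → ℕ) → ℂ := fun b => if h : b ∈ Box i0 a then g ⟨b, h⟩ else 0 with hg'
    have hgsum : ∑ b ∈ Box i0 a, g' b • wv v i0 b = 0 := by
      rw [← Finset.sum_coe_sort (Box i0 a) (fun b => g' b • wv v i0 b), ← hg]
      exact Finset.sum_congr rfl fun b _ => by simp [hg', b.2]
    set A := ∑ j ∈ Finset.univ.erase i0, a j with hA
    have hdegBox : ∀ b ∈ Box i0 a, degf b ≤ A := by
      intro b hb
      obtain ⟨h0, hle⟩ := (mem_Box_iff i0 a b).mp hb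
      rw [degf_erase i0 b h0, hA]
      exact Finset.sum_le_sum fun j _ => hle j
    have key : ∀ K : ℕ, ∀ b ∈ Box i0 a, A + 1 ≤ degf b + K → g' b = 0 := by
      intro K
      induction K with
      | zero =>
        intro b hb hh
        exact absurd hh (by have := hdegBox b hb; omega)
      | succ K ih =>
        intro b hb hh
        by_cases hcase : A + 1 ≤ degf b + K
        · exact ih b hb hcase
        set t := degf b with ht
        have hsplit : ∑ b' ∈ (Box i0 a).filter (fun b' => degf b' = t), g' b' • wv v i0 b'
            ∈ Submodule.span ℂ (Set.range fun b' : ↥(Dlt i0 t) => wv v i0 b'.1) := by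
          have h1 : ∑ b' ∈ (Box i0 a).filter (fun b' => degf b' = t), g' b' • wv v i0 b'
              = - ∑ b' ∈ (Box i0 a).filter (fun b' => ¬ degf b' = t), g' b' • wv v i0 b' := by
            have h2 := Finset.sum_filter_add_sum_filter_not (Box i0 a)
              (fun b' => degf b' = t) (fun b' => g' b' • wv v i0 b')
            rw [hgsum] at h2
            exact eq_neg_of_add_eq_zero_left h2
          rw [h1]
          refine Submodule.neg_mem _ (Submodule.sum_mem _ fun b' hb' => ?_)
          obtain ⟨hb'Box, hb'ne⟩ := Finset.mem_filter.mp hb'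
          by_cases hlt : degf b' < t
          · have hmemD : b' ∈ Dlt i0 t :=
              (mem_Dlt_iff i0 t b').mpr ⟨((mem_Box_iff i0 a b').mp hb'Box).1, hlt⟩
            exact Submodule.smul_mem _ _ (Submodule.subset_span ⟨⟨b', hmemD⟩, rfl⟩)
          · have hz : g' b' = 0 := ih b' hb'Box (by omega)
            rw [hz, zero_smul]
            exact Submodule.zero_mem _
        have hKL := KL i0 a ha c v hd hF hdich t g' hsplit
        exact hKL b (Finset.mem_filter.mpr ⟨hb, rfl⟩)
    intro bsub
    have hz := key (A + 1) bsub.1 bsub.2 (by omega)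
    have h2 : g' bsub.1 = g bsub := by simp [hg', bsub.2]
    rw [← h2, hz]
  calc (Box i0 a).card = Fintype.card ↥(Box i0 a) := (Fintype.card_coe _).symm
    _ ≤ Module.finrank ℂ ({i : Fin r // v i i0 = 1} → ℂ) := hindep.fintype_card_le_finrank
    _ = Fintype.card {i : Fin r // v i i0 = 1} := Module.finrank_fintype_fun_eq_card ℂ
    _ ≤ Fintype.card (Fin r) := Fintype.card_subtype_le _
    _ = r := Fintype.card_fin r

lemma card_Box (i0 : Fin n) (a : Fin n → ℕ) :
    (Box i0 a).card = ∏ j ∈ Finset.univ.erase i0, (a j + 1) := by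
  rw [Box, Fintype.card_piFinset]
  simp only [Finset.card_range]
  rw [← Finset.mul_prod_erase Finset.univ _ (Finset.mem_univ i0), if_pos rfl, one_mul]
  exact Finset.prod_congr rfl fun j hj => by rw [if_neg (Finset.ne_of_mem_erase hj)]

end
end Stmt10

/-- For `n ≥ 2` and `1 ≤ a₁ ≤ ⋯ ≤ aₙ`, the Waring rank of the monomial
`x₁^{a₁} ⋯ xₙ^{aₙ}` is at least `(a₂+1)(a₃+1)⋯(aₙ+1)`. -/
theorem stmt10 (n : ℕ) (hn : 2 ≤ n) (a : Fin n → ℕ)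
    (ha1 : ∀ i, 1 ≤ a i) (hmono : Monotone a) :
    ∏ i ∈ Finset.univ.erase (⟨0, by omega⟩ : Fin n), (a i + 1)
      ≤ waringRank (∑ i, a i) (∏ i, (X i : MvPolynomial (Fin n) ℂ) ^ a i) := by
  classical
  have hn0 : 0 < n := by omega
  set i0 : Fin n := ⟨0, by omega⟩ with hi0
  set d := ∑ i, a i with hd
  have hxa : (∏ i, (X i : MvPolynomial (Fin n) ℂ) ^ a i) = monomial (Stmt10.toF a) 1 :=
    Stmt10.prodXpow a
  have hlin : ∀ u : Fin n → ℂ,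
      (∑ j, u j • (X j : MvPolynomial (Fin n) ℂ)) = Stmt10.lin u := by
    intro u
    rw [Stmt10.lin]
    exact Finset.sum_congr rfl fun j _ => (MvPolynomial.smul_eq_C_mul _ _)
  rw [hxa, waringRank]
  have hnonempty : {r : ℕ | ∃ (c : Fin r → ℂ) (v : Fin r → Fin n → ℂ),
      (monomial (Stmt10.toF a) 1 : MvPolynomial (Fin n) ℂ)
        = ∑ i, c i • (∑ j, v i j • X j) ^ d}.Nonempty := by
    obtain ⟨r₀, c, v, hdecomp⟩ := Stmt10.exists_decomp a
    refine ⟨r₀, c, v, ?_⟩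
    rw [hdecomp]
    exact Finset.sum_congr rfl fun i _ => by rw [hlin (v i)]
  refine le_csInf hnonempty ?_
  intro r hr
  obtain ⟨c, v, hF⟩ := hr
  set c' : Fin r → ℂ := fun i => if v i i0 = 0 then c i else c i * (v i i0) ^ d with hc'
  set v' : Fin r → Fin n → ℂ := fun i => if v i i0 = 0 then v i else (v i i0)⁻¹ • v i with hv'
  have hdich : ∀ i, v' i i0 = 0 ∨ v' i i0 = 1 := by
    intro i
    by_cases h : v i i0 = 0
    · left; simp [hv', h]
    · right; simp [hv', if_neg h, inv_mul_cancel₀ h]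
  have hF' : (monomial (Stmt10.toF a) 1 : MvPolynomial (Fin n) ℂ)
      = ∑ i, c' i • Stmt10.lin (v' i) ^ d := by
    rw [hF]
    refine Finset.sum_congr rfl fun i _ => ?_
    rw [hlin (v i)]
    by_cases h : v i i0 = 0
    · simp [hc', hv', h]
    · have hlv : Stmt10.lin ((v i i0)⁻¹ • v i) = C (v i i0)⁻¹ * Stmt10.lin (v i) := by
        simp only [Stmt10.lin]
        rw [Finset.mul_sum]
        refine Finset.sum_congr rfl fun j _ => ?_
        rw [Pi.smul_apply, smul_eq_mul, C_mul, mul_assoc]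
      simp only [hc', hv', if_neg h]
      rw [hlv, mul_pow, ← C_pow, smul_eq_C_mul, smul_eq_C_mul]
      rw [show (C (c i * v i i0 ^ d) : MvPolynomial (Fin n) ℂ)
            * (C ((v i i0)⁻¹ ^ d) * Stmt10.lin (v i) ^ d)
          = C ((c i * v i i0 ^ d) * (v i i0)⁻¹ ^ d) * Stmt10.lin (v i) ^ d from by
        rw [← mul_assoc, ← C_mul]]
      rw [mul_assoc, ← mul_pow, mul_inv_cancel₀ h, one_pow, mul_one]
  have hbound := Stmt10.main_bound i0 a ha1 c' v' hd hF' hdich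
  calc ∏ i ∈ Finset.univ.erase i0, (a i + 1)
      = (Stmt10.Box i0 a).card := (Stmt10.card_Box i0 a).symm
    _ ≤ r := hbound
end
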